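/- Fix an integer μ ≥ 1, a real λ > 0, and scores z : Fin μ → ℝ. The point ỹ : Fin μ → ℝ defined by ỹ_r = ((1 + μλ)·z_r + Σ_{r' ≠ r} z_{r'}) / (μ(1 + λ)) is the unique global minimizer of f over all of Fin μ → ℝ: for every y : Fin μ → ℝ with y ≠ ỹ one has f(ỹ) < f(y). -/

import Mathlib

open Finset

/-- The point `ytil` is the unique global minimizer of the per-paper objective `f`
over all of `Fin μ → ℝ` (unconstrained stationary-point computation in the proof of
Proposition 2). -/
theorem stmt_1 (μ : ℕ) (hμ : 1 ≤ μ) (lam : ℝ) (hlam : 0 < lam) (z : Fin μ → ℝ)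
    (f : (Fin μ → ℝ) → ℝ)
    (hf : ∀ y : Fin μ → ℝ,
      f y = ∑ r, (y r - (1 / (μ : ℝ)) * ∑ r', y r') ^ 2
        + lam * ∑ r, (y r - z r) ^ 2)
    (ytil : Fin μ → ℝ)
    (hytil : ∀ r, ytil r =
      ((1 + (μ : ℝ) * lam) * z r + ∑ r' ∈ Finset.univ.erase r, z r') / ((μ : ℝ) * (1 + lam))) :
    ∀ y : Fin μ → ℝ, y ≠ ytil → f ytil < f y := by
  intro y hy
  have hμ0 : (μ : ℝ) ≠ 0 := Nat.cast_ne_zero.mpr (by omega)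
  have hlam1 : (1 : ℝ) + lam ≠ 0 := by linarith
  set Z : ℝ := ∑ r, z r with hZdef
  have hkey : ∀ r, lam * (ytil r - z r) = Z / μ - ytil r := by
    intro r
    have he : ∑ r' ∈ Finset.univ.erase r, z r' = Z - z r := by
      rw [hZdef, ← Finset.add_sum_erase _ z (Finset.mem_univ r)]; ring
    have h := hytil r
    rw [he, eq_div_iff (by simp [hμ0, hlam1] : (μ : ℝ) * (1 + lam) ≠ 0)] at h
    field_simp
    linear_combination h
  have hsum : ∑ r, ytil r = Z := by
    have h : ∑ r, (lam * (ytil r - z r)) = ∑ r, (Z / μ - ytil r) := by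
      simp only [hkey]
    rw [← Finset.mul_sum, Finset.sum_sub_distrib, Finset.sum_sub_distrib,
      Finset.sum_const, Finset.card_univ, Fintype.card_fin, nsmul_eq_mul] at h
    have hμZ : (μ : ℝ) * (Z / μ) = Z := by field_simp
    rw [hμZ, ← hZdef] at h
    have h3 : (∑ r, ytil r - Z) * (1 + lam) = 0 := by linear_combination h
    rcases mul_eq_zero.mp h3 with h4 | h4
    · linarith
    · exact absurd h4 hlam1
  set T : ℝ := ∑ r, (y r - ytil r) with hTdef
  have hSy : ∑ r, y r = Z + T := by
    rw [hTdef, Finset.sum_sub_distrib, hsum]; ring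
  have h1 : ∀ r : Fin μ, (y r - (1 / (μ : ℝ)) * ∑ r', y r') ^ 2 + lam * (y r - z r) ^ 2
      = ((ytil r - (1 / (μ : ℝ)) * ∑ r', ytil r') ^ 2 + lam * (ytil r - z r) ^ 2)
        + (((y r - ytil r) - T / μ) ^ 2 + lam * (y r - ytil r) ^ 2)
        - 2 * (T / μ) * (ytil r - Z / μ) := by
    intro r
    have hk := hkey r
    rw [hSy, hsum]
    linear_combination (2 * (y r - ytil r)) * hk
  have hzero : ∑ r, (ytil r - Z / μ) = 0 := by
    rw [Finset.sum_sub_distrib, hsum, Finset.sum_const, Finset.card_univ, Fintype.card_fin,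
      nsmul_eq_mul]
    field_simp
    ring
  have h2 : ∑ r : Fin μ, (2 * (T / μ) * (ytil r - Z / μ)) = 0 := by
    rw [← Finset.mul_sum, hzero, mul_zero]
  have hexpand : f y = f ytil
      + (∑ r, ((y r - ytil r) - T / μ) ^ 2 + lam * ∑ r, (y r - ytil r) ^ 2) := by
    rw [hf y, hf ytil]
    have hL : ∑ r, ((y r - (1 / (μ : ℝ)) * ∑ r', y r') ^ 2) + lam * ∑ r, (y r - z r) ^ 2
        = ∑ r, ((y r - (1 / (μ : ℝ)) * ∑ r', y r') ^ 2 + lam * (y r - z r) ^ 2) := by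
      rw [Finset.sum_add_distrib, ← Finset.mul_sum]
    rw [hL]
    simp only [h1]
    rw [Finset.sum_sub_distrib, Finset.sum_add_distrib, Finset.sum_add_distrib,
      Finset.sum_add_distrib, h2, ← Finset.mul_sum, ← Finset.mul_sum]
    ring
  obtain ⟨r0, hr0⟩ := Function.ne_iff.mp hy
  have hpos : 0 < ∑ r, (y r - ytil r) ^ 2 := by
    apply Finset.sum_pos' (fun r _ => sq_nonneg _)
    exact ⟨r0, Finset.mem_univ r0, pow_two_pos_of_ne_zero (sub_ne_zero.mpr hr0)⟩
  have hq : 0 ≤ ∑ r, ((y r - ytil r) - T / μ) ^ 2 :=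
    Finset.sum_nonneg fun r _ => sq_nonneg _
  have := mul_pos hlam hpos
  linarith [hexpand]
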